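/- arXiv:2403.04324 — 5 statements merged into one kernel-verified Lean document; each statement's English description precedes it below -/
import Mathlib

section
/- If the sublinear expectation E[·] = sup_{P∈P} E_P[·] over a family P of probability measures is regular (i.e., for every uniformly bounded sequence X_m ↓ 0 pointwise one has E[X_m] ↓ 0), and Ω is a countable discrete space, then P is uniformly tight: for every ε > 0 there is a finite set K ⊆ Ω with sup_{P∈P} P(Ω ∖ K) < ε. -/
open MeasureTheory Filter

/-- If the sublinear expectation `E[X] = sup_{P∈Ps} E_P[X]` on a countable
discrete space is regular (for every uniformly bounded sequence `X_m ↓ 0`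
pointwise, `E[X_m] ↓ 0`), then `Ps` is uniformly tight. -/
theorem regular_implies_tight
    (Ps : Set (Measure ℕ)) (hPs : Ps.Nonempty)
    (hprob : ∀ P ∈ Ps, IsProbabilityMeasure P)
    (hreg : ∀ (X : ℕ → ℕ → ℝ) (C : ℝ),
      (∀ m ω, 0 ≤ X m ω) → (∀ m ω, X m ω ≤ C) →
      (∀ ω, Antitone fun m => X m ω) →
      (∀ ω, Tendsto (fun m => X m ω) atTop (nhds 0)) →
      Tendsto (fun m => sSup ((fun P => ∫ ω, X m ω ∂P) '' Ps)) atTop (nhds 0)) :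
    ∀ ε : ℝ, 0 < ε → ∃ K : Finset ℕ,
      (⨆ P ∈ Ps, P ((↑K : Set ℕ)ᶜ)) < ENNReal.ofReal ε := by
  intro ε hε
  set X : ℕ → ℕ → ℝ := fun m ω => if m ≤ ω then 1 else 0 with hX
  have hXind : ∀ m ω, X m ω = Set.indicator {ω : ℕ | m ≤ ω} (fun _ => (1:ℝ)) ω := by
    intro m ω
    simp [hX, Set.indicator_apply, Set.mem_setOf_eq]
  have h0 : ∀ m ω, 0 ≤ X m ω := by
    intro m ω; simp only [hX]; split <;> norm_num
  have h1 : ∀ m ω, X m ω ≤ 1 := by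
    intro m ω; simp only [hX]; split <;> norm_num
  have hanti : ∀ ω, Antitone fun m => X m ω := by
    intro ω m m' hmm'
    simp only [hX]
    by_cases h : m' ≤ ω
    · rw [if_pos h, if_pos (le_trans hmm' h)]
    · rw [if_neg h]
      split <;> norm_num
  have htend : ∀ ω, Tendsto (fun m => X m ω) atTop (nhds 0) := by
    intro ω
    refine tendsto_atTop_of_eventually_const (i₀ := ω + 1) ?_
    intro m hm
    simp only [hX]
    rw [if_neg (by omega)]
  have hmain := hreg X 1 h0 h1 hanti htend
  have hint : ∀ m, ∀ P ∈ Ps, (∫ ω, X m ω ∂P) = (P {ω : ℕ | m ≤ ω}).toReal := by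
    intro m P hP
    have := hprob P hP
    simp only [hXind]
    rw [integral_indicator_const (1:ℝ) (by measurability)]
    simp [Measure.real_def]
  -- pick m with sSup < ε/2
  have hev : ∀ᶠ m in atTop,
      sSup ((fun P => ∫ ω, X m ω ∂P) '' Ps) < ε / 2 := by
    have := hmain.eventually (eventually_lt_nhds (by linarith : (0:ℝ) < ε / 2))
    exact this
  obtain ⟨m, hm⟩ := hev.exists
  refine ⟨Finset.range m, ?_⟩
  have hKc : ((↑(Finset.range m) : Set ℕ)ᶜ) = {ω : ℕ | m ≤ ω} := by
    ext ω; simp [Nat.lt_iff_add_one_le, not_lt]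
  rw [hKc]
  have hbdd : BddAbove ((fun P => ∫ ω, X m ω ∂P) '' Ps) := by
    refine ⟨1, ?_⟩
    rintro x ⟨P, hP, rfl⟩
    have := hprob P hP
    show (∫ ω, X m ω ∂P) ≤ 1
    rw [hint m P hP]
    have : P {ω : ℕ | m ≤ ω} ≤ 1 := prob_le_one
    exact ENNReal.toReal_le_of_le_ofReal zero_le_one (by simpa using this)
  have hle : ∀ P ∈ Ps, P {ω : ℕ | m ≤ ω} ≤ ENNReal.ofReal (ε / 2) := by
    intro P hP
    have hPfin := hprob P hP
    have hmem : (∫ ω, X m ω ∂P) ∈ (fun P => ∫ ω, X m ω ∂P) '' Ps :=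
      ⟨P, hP, rfl⟩
    have hx : (P {ω : ℕ | m ≤ ω}).toReal ≤ ε / 2 := by
      rw [← hint m P hP]
      exact (le_csSup hbdd hmem).trans hm.le
    calc P {ω : ℕ | m ≤ ω}
        = ENNReal.ofReal (P {ω : ℕ | m ≤ ω}).toReal := by
          rw [ENNReal.ofReal_toReal (measure_ne_top P _)]
      _ ≤ ENNReal.ofReal (ε / 2) := ENNReal.ofReal_le_ofReal hx
  calc (⨆ P ∈ Ps, P {ω : ℕ | m ≤ ω}) ≤ ENNReal.ofReal (ε / 2) :=
        iSup₂_le hle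
    _ < ENNReal.ofReal ε := by
        rw [ENNReal.ofReal_lt_ofReal_iff hε]; linarith
end

section
/- If Ω is countable discrete and the family P of probability measures is uniformly tight (for every ε > 0 there is a finite K with sup_{P∈P} P(K^c) < ε), then the sublinear expectation E[X] = sup_{P∈P} E_P[X] is regular: for every uniformly bounded sequence of nonnegative functions X_m ↓ 0 pointwise, E[X_m] ↓ 0. -/
open MeasureTheory Filter

/-- If `Ps` is uniformly tight on a countable discrete space, then the sublinear
expectation `E[X] = sup_{P∈Ps} E_P[X]` is regular: for every uniformly bounded,
nonnegative, pointwise decreasing-to-zero sequence `X_m`, `E[X_m] ↓ 0`. -/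
theorem tight_implies_regular
    (Ps : Set (Measure ℕ)) (hPs : Ps.Nonempty)
    (hprob : ∀ P ∈ Ps, IsProbabilityMeasure P)
    (htight : ∀ ε : ℝ, 0 < ε → ∃ K : Finset ℕ,
      ∀ P ∈ Ps, P ((↑K : Set ℕ)ᶜ) < ENNReal.ofReal ε)
    (X : ℕ → ℕ → ℝ) (C : ℝ)
    (hnn : ∀ m ω, 0 ≤ X m ω) (hbd : ∀ m ω, X m ω ≤ C)
    (hanti : ∀ ω, Antitone fun m => X m ω)
    (hto0 : ∀ ω, Tendsto (fun m => X m ω) atTop (nhds 0)) :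
    Tendsto (fun m => sSup ((fun P => ∫ ω, X m ω ∂P) '' Ps)) atTop (nhds 0) := by
  have hC : 0 ≤ C := le_trans (hnn 0 0) (hbd 0 0)
  have hmeas : ∀ (f : ℕ → ℝ), Measurable f := fun f => measurable_from_nat
  have hint : ∀ m, ∀ P ∈ Ps, Integrable (X m) P := by
    intro m P hP
    have := hprob P hP
    refine (integrable_const C).mono' (hmeas (X m)).aestronglyMeasurable ?_
    filter_upwards with ω
    rw [Real.norm_eq_abs, abs_of_nonneg (hnn m ω)]
    exact hbd m ω
  have hsup_nonneg : ∀ m, 0 ≤ sSup ((fun P => ∫ ω, X m ω ∂P) '' Ps) := by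
    intro m
    obtain ⟨P0, hP0⟩ := hPs
    have hbdd : BddAbove ((fun P => ∫ ω, X m ω ∂P) '' Ps) := by
      refine ⟨C, ?_⟩
      rintro x ⟨P, hP, rfl⟩
      have := hprob P hP
      calc (∫ ω, X m ω ∂P) ≤ ∫ _, C ∂P :=
            integral_mono (hint m P hP) (integrable_const C) (fun ω => hbd m ω)
        _ = C := by simp
    have h0 : (0:ℝ) ≤ ∫ ω, X m ω ∂P0 := integral_nonneg (hnn m)
    exact le_trans h0 (le_csSup hbdd ⟨P0, hP0, rfl⟩)
  rw [Metric.tendsto_atTop]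
  intro ε hε
  set ε' : ℝ := ε / (2 * (C + 1)) with hε'def
  have hε' : 0 < ε' := by positivity
  obtain ⟨K, hK⟩ := htight ε' hε'
  have hev : ∀ᶠ m in atTop, ∀ ω ∈ K, X m ω < ε / 4 := by
    rw [eventually_all_finset]
    intro ω _
    exact (hto0 ω).eventually_lt_const (by positivity)
  obtain ⟨N, hN⟩ := hev.exists_forall_of_atTop
  refine ⟨N, fun m hm => ?_⟩
  have hKc : MeasurableSet ((↑K : Set ℕ)ᶜ) := MeasurableSet.of_discrete
  have hbound : ∀ P ∈ Ps, (∫ ω, X m ω ∂P) ≤ ε / 4 + C * ε' := by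
    intro P hP
    have hPprob := hprob P hP
    have hint2 : Integrable (fun ω => ε / 4 + Set.indicator ((↑K : Set ℕ)ᶜ) (fun _ => C) ω) P :=
      (integrable_const _).add ((integrable_const C).indicator hKc)
    have hpt : ∀ ω, X m ω ≤ ε / 4 + Set.indicator ((↑K : Set ℕ)ᶜ) (fun _ => C) ω := by
      intro ω
      by_cases hω : ω ∈ K
      · rw [Set.indicator_of_notMem (by simpa using hω)]
        have := hN m hm ω hω
        linarith
      · rw [Set.indicator_of_mem (by simpa using hω)]
        have := hbd m ω
        linarith
    calc (∫ ω, X m ω ∂P) ≤ ∫ ω, (ε / 4 + Set.indicator ((↑K : Set ℕ)ᶜ) (fun _ => C) ω) ∂P :=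
          integral_mono (hint m P hP) hint2 hpt
      _ = ε / 4 + (P ((↑K : Set ℕ)ᶜ)).toReal * C := by
          rw [integral_add (integrable_const _) ((integrable_const C).indicator hKc),
            integral_const, integral_indicator_const _ hKc]
          simp [smul_eq_mul, measureReal_def]
      _ ≤ ε / 4 + ε' * C := by
          gcongr
          exact ENNReal.toReal_le_of_le_ofReal hε'.le (hK P hP).le
      _ = ε / 4 + C * ε' := by ring
  have hsup_le : sSup ((fun P => ∫ ω, X m ω ∂P) '' Ps) ≤ ε / 4 + C * ε' := by
    apply Real.sSup_le
    · rintro x ⟨P, hP, rfl⟩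
      exact hbound P hP
    · positivity
  have hCε' : C * ε' < ε / 2 := by
    have h1 : C * ε' = ε / 2 * (C / (C + 1)) := by
      rw [hε'def]; field_simp
    have h2 : C / (C + 1) < 1 := by
      rw [div_lt_one (by linarith)]; linarith
    have h3 : 0 ≤ C / (C + 1) := by positivity
    nlinarith
  rw [Real.dist_eq, abs_of_nonneg (by simpa using hsup_nonneg m)]
  simp only [sub_zero]
  calc sSup ((fun P => ∫ ω, X m ω ∂P) '' Ps) ≤ ε / 4 + C * ε' := hsup_le
    _ < ε / 4 + ε / 2 := by linarith
    _ < ε := by linarith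
end

section
/- Monotone convergence theorem (bounded, increasing) for sublinear expectation over a uniformly tight family: if X_m ↑ X pointwise with all X_m and X uniformly bounded on a countable discrete space, then sup_{P∈P} E_P[X_m] ↑ sup_{P∈P} E_P[X]. -/
open MeasureTheory Filter

lemma integ_of_bdd (P : Measure ℕ) [IsFiniteMeasure P] (f : ℕ → ℝ) (C : ℝ)
    (h : ∀ ω, |f ω| ≤ C) : Integrable f P := by
  refine (integrable_const C).mono' ((measurable_of_countable f).aestronglyMeasurable)
    (ae_of_all _ ?_)
  simpa [Real.norm_eq_abs] using h

/-- Monotone convergence theorem (bounded, increasing) for the sublinear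
expectation over a uniformly tight family: if `X_m ↑ X` pointwise with all
functions uniformly bounded, then `E[X_m] ↑ E[X]`. -/
theorem monotone_convergence_increasing
    (Ps : Set (Measure ℕ)) (hPs : Ps.Nonempty)
    (hprob : ∀ P ∈ Ps, IsProbabilityMeasure P)
    (htight : ∀ ε : ℝ, 0 < ε → ∃ K : Finset ℕ,
      ∀ P ∈ Ps, P ((↑K : Set ℕ)ᶜ) < ENNReal.ofReal ε)
    (X : ℕ → ℕ → ℝ) (Xlim : ℕ → ℝ) (C : ℝ)
    (hbd : ∀ m ω, |X m ω| ≤ C) (hbdlim : ∀ ω, |Xlim ω| ≤ C)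
    (hmono : ∀ ω, Monotone fun m => X m ω)
    (hconv : ∀ ω, Tendsto (fun m => X m ω) atTop (nhds (Xlim ω))) :
    (Monotone fun m => sSup ((fun P => ∫ ω, X m ω ∂P) '' Ps)) ∧
      Tendsto (fun m => sSup ((fun P => ∫ ω, X m ω ∂P) '' Ps)) atTop
        (nhds (sSup ((fun P => ∫ ω, Xlim ω ∂P) '' Ps))) := by
  have hC : 0 ≤ C := le_trans (abs_nonneg _) (hbdlim 0)
  -- X m ≤ Xlim pointwise
  have hle : ∀ m ω, X m ω ≤ Xlim ω := fun m ω =>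
    ge_of_tendsto (hconv ω) (eventually_atTop.2 ⟨m, fun n hn => hmono ω hn⟩)
  have hint : ∀ m, ∀ P ∈ Ps, Integrable (X m) P := fun m P hP => by
    haveI := hprob P hP
    exact integ_of_bdd P (X m) C (hbd m)
  have hintlim : ∀ P ∈ Ps, Integrable Xlim P := fun P hP => by
    haveI := hprob P hP
    exact integ_of_bdd P Xlim C hbdlim
  -- integral ≤ C and bounded above sets
  have hbdd : ∀ m, BddAbove ((fun P => ∫ ω, X m ω ∂P) '' Ps) := by
    intro m
    refine ⟨C, ?_⟩
    rintro y ⟨P, hP, rfl⟩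
    haveI := hprob P hP
    calc ∫ ω, X m ω ∂P ≤ ∫ _ω, C ∂P :=
          integral_mono (hint m P hP) (integrable_const C)
            (fun ω => le_trans (le_abs_self _) (hbd m ω))
      _ = C := by simp
  have hbddlim : BddAbove ((fun P => ∫ ω, Xlim ω ∂P) '' Ps) := by
    refine ⟨C, ?_⟩
    rintro y ⟨P, hP, rfl⟩
    haveI := hprob P hP
    calc ∫ ω, Xlim ω ∂P ≤ ∫ _ω, C ∂P :=
          integral_mono (hintlim P hP) (integrable_const C)
            (fun ω => le_trans (le_abs_self _) (hbdlim ω))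
      _ = C := by simp
  have hne : ∀ m, ((fun P => ∫ ω, X m ω ∂P) '' Ps).Nonempty := fun m => hPs.image _
  have hnelim : ((fun P => ∫ ω, Xlim ω ∂P) '' Ps).Nonempty := hPs.image _
  have hmonoS : Monotone fun m => sSup ((fun P => ∫ ω, X m ω ∂P) '' Ps) := by
    intro m n hmn
    refine csSup_le (hne m) ?_
    rintro y ⟨P, hP, rfl⟩
    refine le_trans ?_ (le_csSup (hbdd n) ⟨P, hP, rfl⟩)
    exact integral_mono (hint m P hP) (hint n P hP) (fun ω => hmono ω hmn)
  refine ⟨hmonoS, ?_⟩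
  -- S_m ≤ S
  have hSle : ∀ m, sSup ((fun P => ∫ ω, X m ω ∂P) '' Ps)
      ≤ sSup ((fun P => ∫ ω, Xlim ω ∂P) '' Ps) := by
    intro m
    refine csSup_le (hne m) ?_
    rintro y ⟨P, hP, rfl⟩
    refine le_trans ?_ (le_csSup hbddlim ⟨P, hP, rfl⟩)
    exact integral_mono (hint m P hP) (hintlim P hP) (hle m)
  rw [Metric.tendsto_atTop]
  intro ε hε
  obtain ⟨K, hK⟩ := htight (ε / (8 * (C + 1))) (by positivity)
  -- uniform convergence on K
  have hunif : ∀ᶠ m in atTop, ∀ ω ∈ K, |X m ω - Xlim ω| ≤ ε / 4 := by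
    rw [eventually_all_finset]
    intro ω _
    have := (hconv ω).sub_const (Xlim ω)
    simp only [sub_self] at this
    have h2 := (this.norm).eventually (ge_mem_nhds (show ‖(0:ℝ)‖ < ε/4 by simp; positivity))
    filter_upwards [h2] with m hm
    simpa [Real.norm_eq_abs] using hm
  obtain ⟨N, hN⟩ := eventually_atTop.1 hunif
  refine ⟨N, fun m hm => ?_⟩
  -- key bound per measure
  have key : ∀ P ∈ Ps, ∫ ω, Xlim ω ∂P ≤ ∫ ω, X m ω ∂P + ε / 2 := by
    intro P hP
    haveI := hprob P hP
    have hKc : MeasurableSet ((↑K : Set ℕ)ᶜ) := (K.measurableSet.compl)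
    have hindint : Integrable ((↑K : Set ℕ)ᶜ.indicator (fun _ => (2*C : ℝ))) P :=
      (integrable_const (2*C)).indicator hKc
    have hptw : ∀ ω, Xlim ω - X m ω ≤ ε/4 + ((↑K : Set ℕ)ᶜ.indicator (fun _ => (2*C : ℝ))) ω := by
      intro ω
      by_cases hω : ω ∈ (↑K : Set ℕ)
      · rw [Set.indicator_of_notMem (by simpa using hω)]
        have := hN m hm ω hω
        have h1 : Xlim ω - X m ω ≤ |X m ω - Xlim ω| := by
          rw [abs_sub_comm]; exact le_abs_self _
        linarith
      · rw [Set.indicator_of_mem (by simpa using hω)]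
        have h1 := abs_le.1 (hbd m ω)
        have h2 := abs_le.1 (hbdlim ω)
        have : 0 ≤ ε/4 := by positivity
        linarith [h1.1, h2.2]
    have hmeasKc : (P ((↑K : Set ℕ)ᶜ)).toReal ≤ ε / (8 * (C + 1)) := by
      have := (hK P hP).le
      have h := ENNReal.toReal_mono (by simp) this
      rwa [ENNReal.toReal_ofReal (by positivity)] at h
    calc ∫ ω, Xlim ω ∂P = ∫ ω, X m ω ∂P + ∫ ω, (Xlim ω - X m ω) ∂P := by
          rw [integral_sub (hintlim P hP) (hint m P hP)]; ring
      _ ≤ ∫ ω, X m ω ∂P + ∫ ω, (ε/4 + ((↑K : Set ℕ)ᶜ.indicator (fun _ => (2*C:ℝ))) ω) ∂P := by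
          refine add_le_add_right (integral_mono ((hintlim P hP).sub (hint m P hP))
            ((integrable_const _).add hindint) hptw) _
      _ = ∫ ω, X m ω ∂P + (ε/4 + 2*C * (P ((↑K : Set ℕ)ᶜ)).toReal) := by
          rw [integral_add (integrable_const _) hindint, integral_const,
            integral_indicator_const _ hKc]
          simp [mul_comm, measureReal_def]
      _ ≤ ∫ ω, X m ω ∂P + ε / 2 := by
          have h2C : 2*C * (P ((↑K : Set ℕ)ᶜ)).toReal ≤ ε/4 := by
            calc 2*C * (P ((↑K : Set ℕ)ᶜ)).toReal
                ≤ 2*(C+1) * (ε / (8 * (C + 1))) := by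
                  apply mul_le_mul (by linarith) hmeasKc (ENNReal.toReal_nonneg) (by positivity)
              _ = ε/4 := by field_simp; ring
          linarith
  -- conclude
  have hSS : sSup ((fun P => ∫ ω, Xlim ω ∂P) '' Ps)
      ≤ sSup ((fun P => ∫ ω, X m ω ∂P) '' Ps) + ε / 2 := by
    refine csSup_le hnelim ?_
    rintro y ⟨P, hP, rfl⟩
    exact le_trans (key P hP) (add_le_add_left (le_csSup (hbdd m) ⟨P, hP, rfl⟩) _)
  rw [Real.dist_eq, abs_sub_lt_iff]
  constructor
  · linarith [hSle m]
  · linarith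
end

section
/- Monotone convergence theorem (bounded, decreasing): under the same setting, if X_m ↓ X pointwise with all X_m and X uniformly bounded, then sup_{P∈P} E_P[X_m] ↓ sup_{P∈P} E_P[X]. -/
open MeasureTheory Filter

/-- Monotone convergence theorem (bounded, decreasing) for the sublinear
expectation over a uniformly tight family: if `X_m ↓ X` pointwise with all
functions uniformly bounded, then `E[X_m] ↓ E[X]`. -/
theorem monotone_convergence_decreasing
    (Ps : Set (Measure ℕ)) (hPs : Ps.Nonempty)
    (hprob : ∀ P ∈ Ps, IsProbabilityMeasure P)
    (htight : ∀ ε : ℝ, 0 < ε → ∃ K : Finset ℕ,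
      ∀ P ∈ Ps, P ((↑K : Set ℕ)ᶜ) < ENNReal.ofReal ε)
    (X : ℕ → ℕ → ℝ) (Xlim : ℕ → ℝ) (C : ℝ)
    (hbd : ∀ m ω, |X m ω| ≤ C) (hbdlim : ∀ ω, |Xlim ω| ≤ C)
    (hanti : ∀ ω, Antitone fun m => X m ω)
    (hconv : ∀ ω, Tendsto (fun m => X m ω) atTop (nhds (Xlim ω))) :
    (Antitone fun m => sSup ((fun P => ∫ ω, X m ω ∂P) '' Ps)) ∧
      Tendsto (fun m => sSup ((fun P => ∫ ω, X m ω ∂P) '' Ps)) atTop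
        (nhds (sSup ((fun P => ∫ ω, Xlim ω ∂P) '' Ps))) := by
  classical
  have hC0 : 0 ≤ C := le_trans (abs_nonneg _) (hbdlim 0)
  have hmeas : ∀ f : ℕ → ℝ, Measurable f := fun f => measurable_from_top
  have hint : ∀ P ∈ Ps, ∀ f : ℕ → ℝ, (∀ ω, |f ω| ≤ C) → Integrable f P := by
    intro P hP f hf
    haveI := hprob P hP
    exact (integrable_const C).mono' (hmeas f).aestronglyMeasurable
      (ae_of_all _ fun ω => by simpa [Real.norm_eq_abs] using hf ω)
  have hXlimle : ∀ m ω, Xlim ω ≤ X m ω := fun m ω =>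
    le_of_tendsto (hconv ω) (eventually_atTop.2 ⟨m, fun n hn => hanti ω hn⟩)
  have hIle : ∀ P ∈ Ps, ∀ f : ℕ → ℝ, (∀ ω, |f ω| ≤ C) → ∫ ω, f ω ∂P ≤ C := by
    intro P hP f hf
    haveI := hprob P hP
    calc ∫ ω, f ω ∂P ≤ ∫ _, C ∂P :=
          integral_mono (hint P hP f hf) (integrable_const C) fun ω => (abs_le.1 (hf ω)).2
      _ = C := by simp
  have hbdd : ∀ (f : ℕ → ℝ), (∀ ω, |f ω| ≤ C) →
      BddAbove ((fun P => ∫ ω, f ω ∂P) '' Ps) := by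
    intro f hf
    refine ⟨C, ?_⟩
    rintro y ⟨P, hP, rfl⟩
    exact hIle P hP f hf
  have hne : ∀ f : ℕ → ℝ, ((fun P => ∫ ω, f ω ∂P) '' Ps).Nonempty :=
    fun f => hPs.image _
  have hmono : ∀ m n, m ≤ n →
      sSup ((fun P => ∫ ω, X n ω ∂P) '' Ps) ≤ sSup ((fun P => ∫ ω, X m ω ∂P) '' Ps) := by
    intro m n hmn
    refine csSup_le (hne _) ?_
    rintro y ⟨P, hP, rfl⟩
    refine le_trans ?_ (le_csSup (hbdd _ (hbd m)) ⟨P, hP, rfl⟩)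
    exact integral_mono (hint P hP _ (hbd n)) (hint P hP _ (hbd m))
      fun ω => hanti ω hmn
  refine ⟨fun m n hmn => hmono m n hmn, ?_⟩
  set L := sSup ((fun P => ∫ ω, Xlim ω ∂P) '' Ps) with hL
  have hlow : ∀ m, L ≤ sSup ((fun P => ∫ ω, X m ω ∂P) '' Ps) := by
    intro m
    refine csSup_le (hne _) ?_
    rintro y ⟨P, hP, rfl⟩
    refine le_trans ?_ (le_csSup (hbdd _ (hbd m)) ⟨P, hP, rfl⟩)
    exact integral_mono (hint P hP _ hbdlim) (hint P hP _ (hbd m))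
      fun ω => hXlimle m ω
  rw [Metric.tendsto_atTop]
  intro ε hε
  have hden : (0:ℝ) < 1 + 2 * C := by linarith
  set δ := ε / (2 * (1 + 2 * C)) with hδdef
  have hδ : 0 < δ := by positivity
  obtain ⟨K, hK⟩ := htight δ hδ
  -- uniform convergence on K
  have hev : ∀ᶠ m in atTop, ∀ ω ∈ K, X m ω - Xlim ω ≤ δ := by
    refine (K.eventually_all).2 fun ω _ => ?_
    have := (hconv ω).eventually (eventually_le_nhds (by linarith : Xlim ω < Xlim ω + δ))
    filter_upwards [this] with m hm
    linarith
  obtain ⟨N, hN⟩ := eventually_atTop.1 hev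
  refine ⟨N, fun m hm => ?_⟩
  have hup : sSup ((fun P => ∫ ω, X m ω ∂P) '' Ps) ≤ L + ε / 2 := by
    refine csSup_le (hne _) ?_
    rintro y ⟨P, hP, rfl⟩
    haveI := hprob P hP
    have hKc : MeasurableSet ((↑K : Set ℕ)ᶜ) := (Set.to_countable _).measurableSet
    have hPKc : (P ((↑K : Set ℕ)ᶜ)).toReal < δ := by
      have := hK P hP
      have hfin : P ((↑K : Set ℕ)ᶜ) ≠ ⊤ := (measure_ne_top P _)
      rw [ENNReal.lt_ofReal_iff_toReal_lt hfin] at this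
      exact this
    have hptw : ∀ ω, X m ω - Xlim ω ≤ δ + Set.indicator ((↑K : Set ℕ)ᶜ) (fun _ => 2 * C) ω := by
      intro ω
      by_cases hω : ω ∈ (↑K : Set ℕ)
      · rw [Set.indicator_of_notMem (by simpa using hω)]
        have := hN m hm ω hω
        linarith
      · rw [Set.indicator_of_mem (by simpa using hω)]
        have h1 := abs_le.1 (hbd m ω)
        have h2 := abs_le.1 (hbdlim ω)
        linarith [h1.2, h2.1]
    have hintInd : Integrable (Set.indicator ((↑K : Set ℕ)ᶜ) (fun _ => 2 * C)) P :=
      (integrable_const (2 * C)).indicator hKc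
    have hsub : ∫ ω, (X m ω - Xlim ω) ∂P ≤
        ∫ ω, (δ + Set.indicator ((↑K : Set ℕ)ᶜ) (fun _ => 2 * C) ω) ∂P := by
      refine integral_mono ?_ ?_ hptw
      · exact (hint P hP _ (hbd m)).sub (hint P hP _ hbdlim)
      · exact (integrable_const δ).add hintInd
    have hrhs : ∫ ω, (δ + Set.indicator ((↑K : Set ℕ)ᶜ) (fun _ => 2 * C) ω) ∂P
        = δ + (P ((↑K : Set ℕ)ᶜ)).toReal * (2 * C) := by
      rw [integral_add (integrable_const δ) hintInd, integral_const,
        integral_indicator_const _ hKc]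
      simp [smul_eq_mul, Measure.real]
    have hsplit : ∫ ω, (X m ω - Xlim ω) ∂P = ∫ ω, X m ω ∂P - ∫ ω, Xlim ω ∂P :=
      integral_sub (hint P hP _ (hbd m)) (hint P hP _ hbdlim)
    have hbound : ∫ ω, X m ω ∂P - ∫ ω, Xlim ω ∂P ≤ δ * (1 + 2 * C) := by
      rw [← hsplit]
      refine hsub.trans ?_
      rw [hrhs]
      have : (P ((↑K : Set ℕ)ᶜ)).toReal * (2 * C) ≤ δ * (2 * C) := by
        apply mul_le_mul_of_nonneg_right hPKc.le (by linarith)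
      linarith
    have hδe : δ * (1 + 2 * C) = ε / 2 := by
      field_simp [hδdef]
      have h2 : δ * (2 * (1 + 2 * C)) = ε := by
        rw [hδdef]; exact div_mul_cancel₀ ε (by positivity)
      linarith
    have hXlimP : ∫ ω, Xlim ω ∂P ≤ L := le_csSup (hbdd _ hbdlim) ⟨P, hP, rfl⟩
    rw [hδe] at hbound
    linarith
  have hlo := hlow m
  rw [Real.dist_eq]
  have habs : |sSup ((fun P => ∫ ω, X m ω ∂P) '' Ps) - L| ≤ ε / 2 :=
    abs_le.2 ⟨by linarith, by linarith⟩
  linarith [half_lt_self hε]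
end

section
/- Dominated convergence theorem for sublinear expectation: if X_m → X pointwise on a countable discrete space, |X_m| ≤ C for a uniform constant C, and P is a uniformly tight family of probability measures, then lim_m sup_{P∈P} E_P[X_m] = sup_{P∈P} E_P[X]. -/
open MeasureTheory Filter

/-- Dominated convergence theorem for the sublinear expectation over a
uniformly tight family: if `X_m → X` pointwise and `|X_m| ≤ C`, then
`lim_m E[X_m] = E[X]`. -/
theorem dominated_convergence
    (Ps : Set (Measure ℕ)) (hPs : Ps.Nonempty)
    (hprob : ∀ P ∈ Ps, IsProbabilityMeasure P)
    (htight : ∀ ε : ℝ, 0 < ε → ∃ K : Finset ℕ,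
      ∀ P ∈ Ps, P ((↑K : Set ℕ)ᶜ) < ENNReal.ofReal ε)
    (X : ℕ → ℕ → ℝ) (Xlim : ℕ → ℝ) (C : ℝ)
    (hbd : ∀ m ω, |X m ω| ≤ C)
    (hconv : ∀ ω, Tendsto (fun m => X m ω) atTop (nhds (Xlim ω))) :
    Tendsto (fun m => sSup ((fun P => ∫ ω, X m ω ∂P) '' Ps)) atTop
      (nhds (sSup ((fun P => ∫ ω, Xlim ω ∂P) '' Ps))) := by
  have hC0 : 0 ≤ C := le_trans (abs_nonneg _) (hbd 0 0)
  have hXlim_bd : ∀ ω, |Xlim ω| ≤ C := fun ω =>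
    le_of_tendsto ((continuous_abs.tendsto _).comp (hconv ω))
      (Eventually.of_forall fun m => hbd m ω)
  have hint : ∀ (f : ℕ → ℝ), (∀ ω, |f ω| ≤ C) → ∀ P ∈ Ps, Integrable f P := by
    intro f hf P hP
    haveI := hprob P hP
    exact (integrable_const C).mono' (measurable_of_countable f).aestronglyMeasurable
      (Eventually.of_forall fun ω => by simpa [Real.norm_eq_abs] using hf ω)
  have hbdd : ∀ (f : ℕ → ℝ), (∀ ω, |f ω| ≤ C) →
      BddAbove ((fun P => ∫ ω, f ω ∂P) '' Ps) := by
    intro f hf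
    refine ⟨C, ?_⟩
    rintro x ⟨P, hP, rfl⟩
    haveI := hprob P hP
    calc ∫ ω, f ω ∂P ≤ ∫ _, C ∂P :=
          integral_mono (hint f hf P hP) (integrable_const C) fun ω => (abs_le.mp (hf ω)).2
      _ = C := by simp
  rw [Metric.tendsto_atTop]
  intro ε hε
  obtain ⟨K, hK⟩ := htight (ε / (4 * (2 * C + 1))) (by positivity)
  have hKmeas : MeasurableSet (↑K : Set ℕ) := (Finset.finite_toSet K).measurableSet
  have hunif : ∀ᶠ m in atTop, ∀ ω ∈ K, |X m ω - Xlim ω| ≤ ε / 4 := by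
    rw [Finset.eventually_all]
    intro ω hω
    have h := (hconv ω)
    rw [Metric.tendsto_atTop] at h
    obtain ⟨N, hN⟩ := h (ε / 4) (by positivity)
    exact eventually_atTop.2 ⟨N, fun m hm => le_of_lt (by simpa [Real.dist_eq] using hN m hm)⟩
  obtain ⟨N, hN⟩ := eventually_atTop.1 hunif
  refine ⟨N, fun m hm => ?_⟩
  rw [Real.dist_eq]
  have key : ∀ P ∈ Ps, |(∫ ω, X m ω ∂P) - ∫ ω, Xlim ω ∂P| ≤ ε / 2 := by
    intro P hP
    haveI := hprob P hP
    have h1 : Integrable (X m) P := hint _ (hbd m) P hP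
    have h2 : Integrable Xlim P := hint _ hXlim_bd P hP
    have habs : Integrable (fun ω => |X m ω - Xlim ω|) P := (h1.sub h2).abs
    have hd2C : ∀ ω, |X m ω - Xlim ω| ≤ 2 * C := by
      intro ω
      calc |X m ω - Xlim ω| ≤ |X m ω| + |Xlim ω| := abs_sub _ _
        _ ≤ 2 * C := by linarith [hbd m ω, hXlim_bd ω]
    have hPK1 : (P (↑K : Set ℕ)).toReal ≤ 1 := by
      have := prob_le_one (μ := P) (s := (↑K : Set ℕ))
      simpa using ENNReal.toReal_mono ENNReal.one_ne_top this
    have hPKc : (P ((↑K : Set ℕ)ᶜ)).toReal ≤ ε / (4 * (2 * C + 1)) :=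
      ENNReal.toReal_le_of_le_ofReal (by positivity) (le_of_lt (hK P hP))
    have e1 : (∫ ω in (↑K : Set ℕ), |X m ω - Xlim ω| ∂P) ≤ ε / 4 := by
      calc (∫ ω in (↑K : Set ℕ), |X m ω - Xlim ω| ∂P)
          ≤ ∫ _ in (↑K : Set ℕ), (ε / 4) ∂P := by
            refine setIntegral_mono_on habs.integrableOn
              (integrableOn_const (measure_lt_top _ _).ne) hKmeas ?_
            intro ω hω
            exact hN m hm ω (by simpa using hω)
        _ = (P (↑K : Set ℕ)).toReal * (ε / 4) := by rw [setIntegral_const]; simp [Measure.real_def]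
        _ ≤ 1 * (ε / 4) := mul_le_mul_of_nonneg_right hPK1 (by positivity)
        _ = ε / 4 := one_mul _
    have e2 : (∫ ω in (↑K : Set ℕ)ᶜ, |X m ω - Xlim ω| ∂P) ≤ ε / 4 := by
      calc (∫ ω in (↑K : Set ℕ)ᶜ, |X m ω - Xlim ω| ∂P)
          ≤ ∫ _ in (↑K : Set ℕ)ᶜ, (2 * C) ∂P := by
            refine setIntegral_mono_on habs.integrableOn
              (integrableOn_const (measure_lt_top _ _).ne) hKmeas.compl ?_
            intro ω _
            exact hd2C ω
        _ = (P ((↑K : Set ℕ)ᶜ)).toReal * (2 * C) := by rw [setIntegral_const]; simp [Measure.real_def]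
        _ ≤ (ε / (4 * (2 * C + 1))) * (2 * C) :=
            mul_le_mul_of_nonneg_right hPKc (by positivity)
        _ ≤ ε / 4 := by
            rw [div_mul_eq_mul_div, div_le_div_iff₀ (by positivity) (by norm_num)]
            nlinarith
    calc |(∫ ω, X m ω ∂P) - ∫ ω, Xlim ω ∂P|
        = |∫ ω, (X m ω - Xlim ω) ∂P| := by rw [integral_sub h1 h2]
      _ ≤ ∫ ω, |X m ω - Xlim ω| ∂P := by
          simpa [Real.norm_eq_abs] using
            norm_integral_le_integral_norm (fun ω => X m ω - Xlim ω) (μ := P)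
      _ = (∫ ω in (↑K : Set ℕ), |X m ω - Xlim ω| ∂P)
            + ∫ ω in (↑K : Set ℕ)ᶜ, |X m ω - Xlim ω| ∂P :=
          (integral_add_compl hKmeas habs).symm
      _ ≤ ε / 4 + ε / 4 := add_le_add e1 e2
      _ = ε / 2 := by ring
  have hbX : BddAbove ((fun P => ∫ ω, X m ω ∂P) '' Ps) := hbdd _ (hbd m)
  have hbL : BddAbove ((fun P => ∫ ω, Xlim ω ∂P) '' Ps) := hbdd _ hXlim_bd
  have hfinal : |sSup ((fun P => ∫ ω, X m ω ∂P) '' Ps)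
      - sSup ((fun P => ∫ ω, Xlim ω ∂P) '' Ps)| ≤ ε / 2 := by
    rw [abs_sub_le_iff]
    constructor
    · rw [sub_le_iff_le_add]
      refine csSup_le (hPs.image _) ?_
      rintro x ⟨P, hP, rfl⟩
      have h1 := (abs_le.mp (key P hP)).2
      have h2 : (∫ ω, Xlim ω ∂P) ≤ sSup ((fun P => ∫ ω, Xlim ω ∂P) '' Ps) :=
        le_csSup hbL (Set.mem_image_of_mem _ hP)
      linarith
    · rw [sub_le_iff_le_add]
      refine csSup_le (hPs.image _) ?_
      rintro x ⟨P, hP, rfl⟩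
      have h1 := (abs_le.mp (key P hP)).1
      have h2 : (∫ ω, X m ω ∂P) ≤ sSup ((fun P => ∫ ω, X m ω ∂P) '' Ps) :=
        le_csSup hbX (Set.mem_image_of_mem _ hP)
      linarith
  linarith [hfinal]
end
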